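/- For every prime p > 6000 and every set J of at least ⌈p/5⌉ distinct residues in {1, ..., p-1}, one has ∏_{j∈J} |cos(πj/p)| ≤ 1/p². -/

import Mathlib

lemma aux_cos_exp (k : ℕ) (hk : k ≤ 40) :
    Real.cos (Real.pi * k / 400) ≤ Real.exp (-(0.0000305 * (k:ℝ)^2)) := by
  have hπl : (3.141592:ℝ) < Real.pi := Real.pi_gt_d6
  have hπu : Real.pi < 3.141593 := Real.pi_lt_d6
  have hkR : (k:ℝ) ≤ 40 := by exact_mod_cast hk
  have hk0 : (0:ℝ) ≤ k := Nat.cast_nonneg k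
  set y : ℝ := Real.pi * k / 400 with hy
  have hy0 : 0 ≤ y := by positivity
  have hyl : 3.141592 / 400 * k ≤ y := by
    rw [hy]; rw [div_mul_eq_mul_div]; gcongr
  have hyu : y ≤ 3.141593 / 400 * k := by
    rw [hy]; rw [div_mul_eq_mul_div]; gcongr
  have hy1 : |y| ≤ 1 := by
    rw [abs_of_nonneg hy0]; nlinarith
  have hcb := Real.cos_bound hy1
  rw [abs_of_nonneg hy0] at hcb
  have h1 : Real.cos y ≤ 1 - y^2/2 + y^4 * (5/96) := by
    have := (abs_le.mp hcb).2; linarith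
  have e1 : (3.141592/400)^2 * (k:ℝ)^2 ≤ y^2 := by
    rw [← mul_pow]; exact pow_le_pow_left₀ (by positivity) hyl 2
  have e2 : y^4 ≤ (3.141593/400)^4 * (k:ℝ)^4 := by
    rw [← mul_pow]; exact pow_le_pow_left₀ hy0 hyu 4
  have e3 : (k:ℝ)^4 ≤ 1600 * (k:ℝ)^2 := by
    have h2 : (k:ℝ)^2 ≤ 1600 := by nlinarith
    nlinarith [sq_nonneg (k:ℝ)]
  have key : (0.0000305:ℝ) + (5/96) * (3.141593/400)^4 * 1600 ≤ (3.141592/400)^2 / 2 := by norm_num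
  have h2 : 1 - y^2/2 + y^4 * (5/96) ≤ 1 - 0.0000305 * (k:ℝ)^2 := by
    nlinarith [key, e1, e2, e3, sq_nonneg (k:ℝ)]
  have h3 : 1 - 0.0000305 * (k:ℝ)^2 ≤ Real.exp (-(0.0000305 * (k:ℝ)^2)) := by
    have := Real.add_one_le_exp (-(0.0000305 * (k:ℝ)^2)); linarith
  linarith

lemma aux_sum_odd' : ∀ k : ℕ, ∑ i ∈ Finset.Icc 1 k, (2*i-1) = k^2 := by
  intro k
  induction k with
  | zero => simp
  | succ n ih =>
    rw [Finset.sum_Icc_succ_top (by omega), ih]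
    have : (n+1)^2 = n^2 + 2*n + 1 := by ring
    omega

lemma aux_sum_odd (k : ℕ) (hk : k ≤ 40) :
    ∑ i ∈ Finset.Icc 1 40, (if i ≤ k then 2*i-1 else 0) = k^2 := by
  rw [← Finset.sum_filter]
  have hfe : (Finset.Icc 1 40).filter (· ≤ k) = Finset.Icc 1 k := by
    ext x; simp only [Finset.mem_filter, Finset.mem_Icc]; omega
  rw [hfe, aux_sum_odd']


theorem cos_product_small (p : ℕ) (hp : p.Prime) (h : 6000 < p)
    (J : Finset ℕ) (hJ : J ⊆ Finset.Icc 1 (p - 1))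
    (hcard : (p + 4) / 5 ≤ J.card) :
    ∏ j ∈ J, |Real.cos (Real.pi * j / p)| ≤ 1 / (p : ℝ) ^ 2 := by
  have hp0 : 0 < p := by omega
  have hpR : (6001:ℝ) ≤ p := by exact_mod_cast h
  set K : ℕ → ℕ := fun j => min (400 * min j (p - j) / p) 40 with hKdef
  have hK40 : ∀ j, K j ≤ 40 := fun j => min_le_right _ _
  set N : ℕ → ℕ := fun i => (J.filter (fun j => i ≤ K j)).card with hNdef
  -- Step 1: pointwise bound
  have step1 : ∀ j ∈ J, |Real.cos (Real.pi * j / p)| ≤ Real.exp (-(0.0000305 * ((K j : ℝ))^2)) := by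
    intro j hj
    obtain ⟨hj1, hj2⟩ := Finset.mem_Icc.mp (hJ hj)
    have hjp : j ≤ p := by omega
    have habs : |Real.cos (Real.pi * j / p)| = Real.cos (Real.pi * (min j (p - j) : ℕ) / p) := by
      rcases le_or_gt (2 * j) p with h2 | h2
      · have hmin : min j (p - j) = j := min_eq_left (by omega)
        rw [hmin, abs_of_nonneg]
        apply Real.cos_nonneg_of_mem_Icc
        constructor
        · have : (0:ℝ) ≤ Real.pi * j / p := by positivity
          have := Real.pi_pos; linarith
        · rw [div_le_iff₀ (by positivity)]
          have hc : (2 * j : ℝ) ≤ p := by exact_mod_cast h2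
          nlinarith [Real.pi_pos]
      · have hmin : min j (p - j) = p - j := min_eq_right (by omega)
        rw [hmin]
        have hcast : ((p - j : ℕ) : ℝ) = (p : ℝ) - j := by
          push_cast [hjp]; ring
        have hrw : Real.pi * j / p = Real.pi - Real.pi * ((p - j : ℕ) : ℝ) / p := by
          rw [hcast]
          field_simp
          ring
        rw [hrw, Real.cos_pi_sub, abs_neg, abs_of_nonneg]
        apply Real.cos_nonneg_of_mem_Icc
        constructor
        · have : (0:ℝ) ≤ Real.pi * ((p-j:ℕ):ℝ) / p := by positivity
          have := Real.pi_pos; linarith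
        · rw [div_le_iff₀ (by positivity)]
          have hc : (2 * ((p - j:ℕ)) : ℝ) ≤ p := by
            have : 2 * (p - j) ≤ p := by omega
            exact_mod_cast this
          nlinarith [Real.pi_pos]
    rw [habs]
    have hstep : Real.cos (Real.pi * (min j (p - j) : ℕ) / p) ≤ Real.cos (Real.pi * (K j : ℝ) / 400) := by
      apply Real.cos_le_cos_of_nonneg_of_le_pi
      · positivity
      · -- π * m / p ≤ π
        rw [div_le_iff₀ (by positivity)]
        have hmle : ((min j (p-j) : ℕ):ℝ) ≤ p := by
          have : min j (p - j) ≤ p := by omega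
          exact_mod_cast this
        nlinarith [Real.pi_pos]
      · -- π K/400 ≤ π m/p
        have hKle : (K j) * p ≤ 400 * min j (p - j) := by
          have h1 : K j ≤ 400 * min j (p-j) / p := min_le_left _ _
          exact Nat.le_div_iff_mul_le hp0 |>.mp h1
        rw [div_le_div_iff₀ (by norm_num) (by positivity)]
        have hcast : ((K j : ℕ):ℝ) * p ≤ 400 * ((min j (p-j) : ℕ):ℝ) := by exact_mod_cast hKle
        nlinarith [Real.pi_pos]
    calc Real.cos (Real.pi * (min j (p - j) : ℕ) / p)
        ≤ Real.cos (Real.pi * (K j : ℝ) / 400) := hstep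
      _ ≤ Real.exp (-(0.0000305 * ((K j : ℝ))^2)) := aux_cos_exp (K j) (hK40 j)
  -- Step 2: product bound
  have step2 : ∏ j ∈ J, |Real.cos (Real.pi * j / p)| ≤ Real.exp (-(0.0000305 * ∑ j ∈ J, ((K j : ℝ))^2)) := by
    calc ∏ j ∈ J, |Real.cos (Real.pi * j / p)|
        ≤ ∏ j ∈ J, Real.exp (-(0.0000305 * ((K j : ℝ))^2)) :=
          Finset.prod_le_prod (fun j _ => abs_nonneg _) step1
      _ = Real.exp (∑ j ∈ J, -(0.0000305 * ((K j : ℝ))^2)) := (Real.exp_sum _ _).symm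
      _ = Real.exp (-(0.0000305 * ∑ j ∈ J, ((K j : ℝ))^2)) := by
          congr 1
          rw [Finset.mul_sum]
          exact Finset.sum_neg_distrib _
  -- Counting: swap identity
  have hswap : ∑ j ∈ J, (K j)^2 = ∑ i ∈ Finset.Icc 1 40, (2*i-1) * N i := by
    calc ∑ j ∈ J, (K j)^2
        = ∑ j ∈ J, ∑ i ∈ Finset.Icc 1 40, (if i ≤ K j then 2*i-1 else 0) := by
          exact Finset.sum_congr rfl fun j _ => (aux_sum_odd (K j) (hK40 j)).symm
      _ = ∑ i ∈ Finset.Icc 1 40, ∑ j ∈ J, (if i ≤ K j then 2*i-1 else 0) := Finset.sum_comm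
      _ = ∑ i ∈ Finset.Icc 1 40, (2*i-1) * N i := by
          refine Finset.sum_congr rfl fun i _ => ?_
          rw [← Finset.sum_filter, Finset.sum_const, smul_eq_mul, mul_comm]
  -- counting bound per i
  have hN : ∀ i ∈ Finset.Icc 1 40, ((40 - i : ℕ):ℝ) * p / 200 ≤ (N i : ℝ) := by
    intro i hi
    obtain ⟨hi1, hi40⟩ := Finset.mem_Icc.mp hi
    set a := i * p / 400 with hadef
    have hsub : J.filter (fun j => ¬ i ≤ K j) ⊆ Finset.Icc 1 a ∪ Finset.Icc (p - a) (p - 1) := by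
      intro j hj
      obtain ⟨hjJ, hKj⟩ := Finset.mem_filter.mp hj
      obtain ⟨hj1, hj2⟩ := Finset.mem_Icc.mp (hJ hjJ)
      push_neg at hKj
      have hX : 400 * min j (p - j) / p < i := by
        have : K j = min (400 * min j (p - j) / p) 40 := rfl
        omega
      have h2 : 400 * min j (p - j) < i * p := by
        have := (Nat.div_lt_iff_lt_mul hp0).mp hX
        omega
      have hm : min j (p - j) ≤ a := by
        rw [hadef]
        rw [Nat.le_div_iff_mul_le (by norm_num)]
        omega
      rw [Finset.mem_union, Finset.mem_Icc, Finset.mem_Icc]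
      omega
    have hcount : (J.filter (fun j => ¬ i ≤ K j)).card ≤ 2 * a := by
      calc (J.filter (fun j => ¬ i ≤ K j)).card
          ≤ (Finset.Icc 1 a ∪ Finset.Icc (p - a) (p - 1)).card := Finset.card_le_card hsub
        _ ≤ (Finset.Icc 1 a).card + (Finset.Icc (p - a) (p - 1)).card := Finset.card_union_le _ _
        _ ≤ 2 * a := by
            rw [Nat.card_Icc, Nat.card_Icc]
            have hap : a ≤ p := by
              have := Nat.div_le_self (i * p) 400
              calc a ≤ i * p / 400 := le_refl _
                _ ≤ 40 * p / 400 := by apply Nat.div_le_div_right; exact Nat.mul_le_mul_right p hi40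
                _ ≤ p := by omega
            omega
    have hsplit : N i + (J.filter (fun j => ¬ i ≤ K j)).card = J.card := by
      rw [hNdef]
      exact Finset.card_filter_add_card_filter_not _
    have hq : (p : ℝ) / 5 ≤ (J.card : ℝ) := by
      have h5 : p ≤ 5 * J.card := by omega
      have : (p:ℝ) ≤ 5 * J.card := by exact_mod_cast h5
      linarith
    have ha : 400 * (a : ℝ) ≤ i * p := by
      have h1 : 400 * a ≤ i * p := by
        rw [hadef]; have := Nat.div_mul_le_self (i * p) 400; omega
      exact_mod_cast h1
    have hNge : (J.card : ℝ) ≤ (N i : ℝ) + 2 * a := by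
      have : J.card ≤ N i + 2 * a := by omega
      exact_mod_cast this
    have hicast : ((40 - i : ℕ):ℝ) = 40 - (i:ℝ) := by
      push_cast [hi40]; ring
    rw [hicast]
    have hiR : (i:ℝ) ≤ 40 := by exact_mod_cast hi40
    linarith
  -- assemble sum lower bound
  have hT : ∑ i ∈ Finset.Icc 1 40, (2*i-1)*(40-i) = 20540 := by decide
  have hsumR : (1027/10 : ℝ) * p ≤ ∑ j ∈ J, ((K j : ℝ))^2 := by
    have hSN : (∑ j ∈ J, ((K j : ℝ))^2) = ((∑ j ∈ J, (K j)^2 : ℕ) : ℝ) := by push_cast; rfl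
    rw [hSN, hswap]
    rw [Nat.cast_sum]
    have heval : ∑ i ∈ Finset.Icc 1 40, (((2*i-1)*(40-i) : ℕ):ℝ) * ((p:ℝ)/200) = (1027/10 : ℝ) * p := by
      rw [← Finset.sum_mul, ← Nat.cast_sum, hT]
      norm_num
      ring
    rw [← heval]
    apply Finset.sum_le_sum
    intro i hi
    obtain ⟨hi1, hi40⟩ := Finset.mem_Icc.mp hi
    have hNi := hN i hi
    have hc1 : (((2*i-1) : ℕ):ℝ) ≥ 0 := Nat.cast_nonneg _
    calc (((2*i-1)*(40-i) : ℕ):ℝ) * ((p:ℝ)/200)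
        = (((2*i-1) : ℕ):ℝ) * (((40-i : ℕ):ℝ) * p / 200) := by push_cast; ring
      _ ≤ (((2*i-1) : ℕ):ℝ) * (N i : ℝ) := by
          apply mul_le_mul_of_nonneg_left hNi hc1
      _ = (((2*i-1) * N i : ℕ):ℝ) := by push_cast; ring
  -- final numeric step
  have hfinal : Real.exp (-(0.0000305 * ((1027/10 : ℝ) * p))) ≤ 1 / (p:ℝ)^2 := by
    rw [Real.exp_neg, one_div]
    refine inv_anti₀ (by positivity) ?_
    -- p^2 ≤ exp (c p)
    have hlog : Real.log ((p:ℝ)^2) ≤ 0.0000305 * ((1027/10) * p) := by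
      rw [Real.log_pow]
      have h1 : Real.log (p:ℝ) = Real.log 6001 + Real.log ((p:ℝ)/6001) := by
        rw [← Real.log_mul (by norm_num) (by positivity)]
        congr 1
        field_simp
      have h2 : Real.log 6001 ≤ 9 := by
        rw [Real.log_le_iff_le_exp (by norm_num)]
        calc (6001:ℝ) ≤ 2.7182818283 ^ (9:ℕ) := by norm_num
          _ ≤ Real.exp 1 ^ (9:ℕ) :=
              pow_le_pow_left₀ (by norm_num) (le_of_lt Real.exp_one_gt_d9) 9
          _ = Real.exp ((9:ℕ):ℝ) := Real.exp_one_pow 9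
          _ = Real.exp 9 := by norm_num
      have h3 : Real.log ((p:ℝ)/6001) ≤ (p:ℝ)/6001 - 1 := Real.log_le_sub_one_of_pos (by positivity)
      push_cast
      linarith
    calc (p:ℝ)^2 = Real.exp (Real.log ((p:ℝ)^2)) := (Real.exp_log (by positivity)).symm
      _ ≤ Real.exp (0.0000305 * ((1027/10 : ℝ) * p)) := Real.exp_le_exp.mpr hlog
  -- chain everything
  calc ∏ j ∈ J, |Real.cos (Real.pi * j / p)|
      ≤ Real.exp (-(0.0000305 * ∑ j ∈ J, ((K j : ℝ))^2)) := step2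
    _ ≤ Real.exp (-(0.0000305 * ((1027/10 : ℝ) * p))) := by
        apply Real.exp_le_exp.mpr
        have : (0:ℝ) ≤ 0.0000305 := by norm_num
        nlinarith [hsumR]
    _ ≤ 1 / (p:ℝ)^2 := hfinal
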